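/- Let c ≥ 1 be an integer, k an odd positive integer, ζ a primitive 2c-th root of unity, and a ∈ ℤ[ζ]. If n ≥ kc, then Φ_{kc}(q) divides ∑_{m=0}^{n} ζ^m a · binom(n,m)_q in ℤ[ζ][q]. -/

import Mathlib

open Polynomial Finset

/-- The Gaussian (q-)binomial coefficient as a polynomial, satisfying the
product formula `∏_{i=n-m+1}^{n}(1-q^i) / ∏_{i=1}^{m}(1-q^i)`. -/
noncomputable def qbinom (R : Type*) [CommRing R] : ℕ → ℕ → Polynomial R
  | _, 0 => 1
  | 0, _+1 => 0
  | n+1, m+1 => qbinom R n (m+1) + X ^ (n - m) * qbinom R n m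

/-- The subring ℤ[ζ] of ℂ. -/
noncomputable abbrev Zadj (ζ : ℂ) : Type := Algebra.adjoin ℤ ({ζ} : Set ℂ)

/-- ζ as an element of ℤ[ζ]. -/
noncomputable def zeta (ζ : ℂ) : Zadj ζ := ⟨ζ, Algebra.self_mem_adjoin_singleton ℤ ζ⟩

lemma qbinom_zero_right (R : Type*) [CommRing R] (n : ℕ) : qbinom R n 0 = 1 := by
  cases n <;> rfl

lemma qbinom_succ_succ (R : Type*) [CommRing R] (n m : ℕ) :
    qbinom R (n+1) (m+1) = qbinom R n (m+1) + X ^ (n - m) * qbinom R n m := rfl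

lemma qbinom_eq_zero (R : Type*) [CommRing R] : ∀ n m : ℕ, n < m → qbinom R n m = 0
  | 0, _+1, _ => rfl
  | n+1, m+1, h => by
    rw [qbinom_succ_succ, qbinom_eq_zero R n (m+1) (by omega),
      qbinom_eq_zero R n m (by omega)]
    ring

lemma qbinom_self (R : Type*) [CommRing R] : ∀ n : ℕ, qbinom R n n = 1
  | 0 => rfl
  | n+1 => by
    rw [qbinom_succ_succ, qbinom_eq_zero R n (n+1) (by omega), qbinom_self R n]
    simp


lemma qbinom_mul_prod (R : Type*) [CommRing R] :
    ∀ n m : ℕ, m ≤ n →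
      qbinom R n m * ∏ i ∈ range m, (1 - (X : R[X]) ^ (i + 1)) =
        ∏ i ∈ range m, (1 - (X : R[X]) ^ (n - m + 1 + i))
  | n, 0, _ => by simp [qbinom_zero_right]
  | 0, m+1, h => by omega
  | n+1, m+1, h => by
    have hm : m ≤ n := by omega
    rcases eq_or_lt_of_le hm with rfl | hlt
    · rw [qbinom_succ_succ, qbinom_eq_zero R m (m+1) (by omega), qbinom_self, Nat.sub_self,
        pow_zero, zero_add, one_mul, one_mul]
      exact Finset.prod_congr rfl fun i _ => by congr 2; omega
    · have h1 : m + 1 ≤ n := hlt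
      have IH1 := qbinom_mul_prod R n (m+1) h1
      have IH2 := qbinom_mul_prod R n m hm
      set Q : R[X] := ∏ i ∈ range m, (1 - (X : R[X]) ^ (n - m + 1 + i)) with hQ
      have e1 : (∏ i ∈ range (m+1), (1 - (X : R[X]) ^ (n - (m+1) + 1 + i)))
          = Q * (1 - X ^ (n - m)) := by
        rw [Finset.prod_range_succ' (fun i => 1 - (X : R[X]) ^ (n - (m+1) + 1 + i)) m]
        congr 1
        · exact Finset.prod_congr rfl fun i _ => by congr 2; omega
        · congr 2; omega
      rw [e1] at IH1
      have e2 : (∏ i ∈ range (m+1), (1 - (X : R[X]) ^ (n + 1 - (m+1) + 1 + i)))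
          = Q * (1 - X ^ (n+1)) := by
        rw [Finset.prod_range_succ]
        congr 1
        · exact Finset.prod_congr rfl fun i _ => by congr 2; omega
        · congr 2; omega
      rw [e2, Finset.prod_range_succ, qbinom_succ_succ]
      have hx : (X : R[X]) ^ (n - m) * X ^ (m + 1) = X ^ (n + 1) := by
        rw [← pow_add]; congr 1; omega
      calc (qbinom R n (m+1) + X ^ (n - m) * qbinom R n m) *
            ((∏ i ∈ range m, (1 - (X:R[X]) ^ (i + 1))) * (1 - X ^ (m+1)))
          = (qbinom R n (m+1) * ∏ i ∈ range m, (1 - (X:R[X]) ^ (i + 1))) * (1 - X ^ (m+1))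
            + X ^ (n - m) * (qbinom R n m * ∏ i ∈ range m, (1 - (X:R[X]) ^ (i + 1)))
              * (1 - X ^ (m+1)) := by ring
        _ = (qbinom R n (m+1) * ∏ i ∈ range (m+1), (1 - (X:R[X]) ^ (i + 1)))
            + X ^ (n - m) * Q * (1 - X ^ (m+1)) := by
              rw [IH2, Finset.prod_range_succ]; ring
        _ = Q * (1 - X ^ (n - m)) + X ^ (n - m) * Q * (1 - X ^ (m+1)) := by rw [IH1]
        _ = Q * (1 - X ^ (n+1)) := by linear_combination (-Q) * hx

lemma qbinom_map {R S : Type*} [CommRing R] [CommRing S] (f : R →+* S) :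
    ∀ n m : ℕ, (qbinom R n m).map f = qbinom S n m
  | n, 0 => by simp [qbinom_zero_right]
  | 0, m+1 => by
    rw [show qbinom R 0 (m+1) = 0 from rfl, show qbinom S 0 (m+1) = 0 from rfl,
      Polynomial.map_zero]
  | n+1, m+1 => by
    rw [qbinom_succ_succ, qbinom_succ_succ, Polynomial.map_add, Polynomial.map_mul,
      Polynomial.map_pow, map_X, qbinom_map f n (m+1), qbinom_map f n m]

lemma qbinom_eval_eq_zero {d m : ℕ} {ω : ℂ} (hω : IsPrimitiveRoot ω d)
    (h0 : 0 < m) (hmd : m < d) : (qbinom ℂ d m).eval ω = 0 := by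
  have key := congrArg (Polynomial.eval ω) (qbinom_mul_prod ℂ d m hmd.le)
  simp only [eval_mul, eval_prod, eval_sub, eval_one, eval_pow, eval_X] at key
  have hr : ∏ i ∈ range m, (1 - ω ^ (d - m + 1 + i)) = 0 := by
    apply Finset.prod_eq_zero (Finset.mem_range.2 (Nat.sub_lt h0 Nat.one_pos))
    rw [show d - m + 1 + (m - 1) = d by omega, hω.pow_eq_one]
    ring
  rw [hr] at key
  have hne : ∏ i ∈ range m, (1 - ω ^ (i + 1)) ≠ 0 := by
    rw [Finset.prod_ne_zero_iff]
    intro i hi h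
    have h1 : ω ^ (i+1) = 1 := by linear_combination -h
    have h2 := Nat.le_of_dvd (Nat.succ_pos i) (hω.dvd_of_pow_eq_one _ h1)
    have := Finset.mem_range.1 hi
    omega
  exact (mul_eq_zero.1 key).resolve_right hne

lemma key_vanish {d : ℕ} (hd : 0 < d) {ω : ℂ} (hω : IsPrimitiveRoot ω d) :
    ∀ n : ℕ, d ≤ n → ∀ t : ℂ, t ^ d = -1 →
      ∑ m ∈ range (n+1), t ^ m * (qbinom ℂ n m).eval ω = 0 := by
  intro n hn
  induction n, hn using Nat.le_induction with
  | base =>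
    intro t ht
    rw [Finset.sum_range_succ]
    have h1 : ∑ m ∈ range d, t ^ m * (qbinom ℂ d m).eval ω = 1 := by
      rw [Finset.sum_eq_single_of_mem 0 (Finset.mem_range.2 hd)
        (fun m hm h0 => by
          rw [qbinom_eval_eq_zero hω (Nat.pos_of_ne_zero h0) (Finset.mem_range.1 hm),
            mul_zero])]
      simp [qbinom_zero_right]
    rw [h1, qbinom_self, eval_one, mul_one, ht]
    ring
  | succ n hn IH =>
    intro t ht
    have hω0 : ω ≠ 0 := hω.ne_zero hd.ne'
    rw [Finset.sum_range_succ' (fun m => t ^ m * (qbinom ℂ (n+1) m).eval ω) (n+1)]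
    have e2 : t ^ 0 * (qbinom ℂ (n+1) 0).eval ω = 1 := by simp [qbinom_zero_right]
    have e3 : ∀ m ∈ range (n+1), t ^ (m+1) * (qbinom ℂ (n+1) (m+1)).eval ω
        = t ^ (m+1) * (qbinom ℂ n (m+1)).eval ω
          + (t * ω ^ n) * ((t * ω⁻¹) ^ m * (qbinom ℂ n m).eval ω) := by
      intro m hm
      have hm' : m ≤ n := by have := Finset.mem_range.1 hm; omega
      rw [qbinom_succ_succ, eval_add, eval_mul, eval_pow, eval_X,
        pow_sub₀ ω hω0 hm', mul_pow, inv_pow]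
      ring
    rw [Finset.sum_congr rfl e3, Finset.sum_add_distrib, ← Finset.mul_sum]
    have h4 : ∑ m ∈ range (n+1), (t * ω⁻¹) ^ m * (qbinom ℂ n m).eval ω = 0 := by
      apply IH
      rw [mul_pow, inv_pow, hω.pow_eq_one, inv_one, mul_one, ht]
    have h5 : ∑ m ∈ range (n+1), t ^ (m+1) * (qbinom ℂ n (m+1)).eval ω = -1 := by
      have h6 := Finset.sum_range_succ' (fun m => t ^ m * (qbinom ℂ n m).eval ω) (n+1)
      have h7 : ∑ m ∈ range (n+1+1), t ^ m * (qbinom ℂ n m).eval ω = 0 := by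
        rw [Finset.sum_range_succ, IH t ht, qbinom_eq_zero ℂ n (n+1) (by omega),
          eval_zero, mul_zero, add_zero]
      rw [h7] at h6
      have h8 : t ^ 0 * (qbinom ℂ n 0).eval ω = 1 := by simp [qbinom_zero_right]
      rw [h8] at h6
      linear_combination -h6
    rw [h4, h5, e2]
    ring

theorem first_order_vanishing_const (c k : ℕ) (hc : 1 ≤ c) (hk : Odd k) (hk0 : 0 < k)
    (ζ : ℂ) (hζ : IsPrimitiveRoot ζ (2 * c)) (a : Zadj ζ) (n : ℕ) (hn : k * c ≤ n) :
    Polynomial.cyclotomic (k * c) (Zadj ζ) ∣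
      ∑ m ∈ Finset.range (n + 1), C (zeta ζ ^ m * a) * qbinom (Zadj ζ) n m := by
  have hd : 0 < k * c := Nat.mul_pos hk0 hc
  -- ζ ^ (k*c) = -1
  have hζc : ζ ^ c = -1 := by
    have hne : ζ ^ c ≠ 1 := hζ.pow_ne_one_of_pos_of_lt (by omega) (by omega)
    have hsq : (ζ ^ c) ^ 2 = 1 := by
      rw [← pow_mul, mul_comm, hζ.pow_eq_one]
    rcases mul_eq_zero.1
        (show (ζ ^ c - 1) * (ζ ^ c + 1) = 0 by linear_combination hsq) with h | h
    · exact absurd (sub_eq_zero.1 h) hne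
    · linear_combination h
  have hζd : ζ ^ (k * c) = -1 := by
    obtain ⟨j, hj⟩ := hk
    rw [show k * c = 2 * c * j + c by rw [hj]; ring, pow_add, pow_mul, hζ.pow_eq_one,
      one_pow, one_mul, hζc]
  -- transfer to ℂ
  set φ : Zadj ζ →+* ℂ := ((Algebra.adjoin ℤ ({ζ} : Set ℂ)).val : _ →ₐ[ℤ] ℂ).toRingHom with hφ
  have hφinj : Function.Injective φ := Subtype.val_injective
  rw [← Polynomial.map_dvd_map φ hφinj (Polynomial.cyclotomic.monic _ _),
    Polynomial.map_cyclotomic]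
  have hmap : (∑ m ∈ Finset.range (n + 1), C (zeta ζ ^ m * a) * qbinom (Zadj ζ) n m).map φ
      = ∑ m ∈ Finset.range (n + 1), C (ζ ^ m * φ a) * qbinom ℂ n m := by
    rw [Polynomial.map_sum]
    refine Finset.sum_congr rfl fun m _ => ?_
    rw [Polynomial.map_mul, map_C, qbinom_map]
    congr 1
  rw [hmap]
  obtain ⟨ω₀, hω₀⟩ : ∃ ω₀ : ℂ, IsPrimitiveRoot ω₀ (k * c) :=
    ⟨_, Complex.isPrimitiveRoot_exp _ hd.ne'⟩
  rw [Polynomial.cyclotomic_eq_prod_X_sub_primitiveRoots hω₀]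
  apply Finset.prod_dvd_of_coprime
  · intro μ hμ ν hν hne
    exact Polynomial.isCoprime_X_sub_C_of_isUnit_sub (isUnit_iff_ne_zero.2 (sub_ne_zero.2 hne))
  · intro μ hμ
    have hμp : IsPrimitiveRoot μ (k * c) := (mem_primitiveRoots hd).1 hμ
    rw [Polynomial.dvd_iff_isRoot]
    have := key_vanish hd hμp n hn ζ hζd
    simp only [IsRoot, eval_finset_sum, eval_mul, eval_C]
    calc ∑ m ∈ Finset.range (n + 1), ζ ^ m * φ a * (qbinom ℂ n m).eval μ
        = φ a * ∑ m ∈ Finset.range (n + 1), ζ ^ m * (qbinom ℂ n m).eval μ := by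
          rw [Finset.mul_sum]; exact Finset.sum_congr rfl fun m _ => by ring
      _ = 0 := by rw [this, mul_zero]
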